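/- The q-th power of a multivariate q-Gaussian kernel is a q'-Gaussian kernel: let n ≥ 1, 1 < q < 1 + 2/n, let Σ_q ∈ ℝ^{n×n} be symmetric positive definite, and set q' = 2 - 1/q and Σ_q' = ((n+2-nq)/(n+(2-n)q))·Σ_q. Then for every y ∈ ℝⁿ, [1 + ((q'-1)/(n+2-nq'))·yᵀ(Σ_q')⁻¹y]^{-1/(q'-1)} = ([1 + ((q-1)/(n+2-nq))·yᵀΣ_q⁻¹y]^{-1/(q-1)})^q. Consequently, the q-escort distribution of a q-Gaussian with q-covariance Σ_q is the q'-Gaussian with q-covariance Σ_q'. -/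

import Mathlib

open Matrix

/-- The q-th power of a multivariate q-Gaussian kernel is a q'-Gaussian kernel:
for `n ≥ 1`, `1 < q < 1 + 2/n`, symmetric positive-definite `S` (the q-covariance),
`q' = 2 - 1/q` and `S' = ((n+2-nq)/(n+(2-n)q))·S`, one has, for every `y ∈ ℝⁿ`,
`[1 + ((q'-1)/(n+2-nq'))·yᵀS'⁻¹y]^(-1/(q'-1)) = ([1 + ((q-1)/(n+2-nq))·yᵀS⁻¹y]^(-1/(q-1)))^q`.
Consequently, the q-escort distribution of a q-Gaussian with q-covariance `S` is the
q'-Gaussian with q-covariance `S'`. -/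
theorem qGaussian_escort_is_q'Gaussian (n : ℕ) (hn : 1 ≤ n) (q : ℝ)
    (hq1 : 1 < q) (hq2 : q < 1 + 2 / (n : ℝ))
    (S : Matrix (Fin n) (Fin n) ℝ) (hsymm : S.IsSymm) (hpos : S.PosDef)
    (q' : ℝ) (hq' : q' = 2 - 1 / q)
    (S' : Matrix (Fin n) (Fin n) ℝ)
    (hS' : S' = (((n : ℝ) + 2 - n * q) / ((n : ℝ) + (2 - (n : ℝ)) * q)) • S)
    (y : Fin n → ℝ) :
    (1 + ((q' - 1) / ((n : ℝ) + 2 - n * q')) * (y ⬝ᵥ S'⁻¹.mulVec y)) ^ (-(1 / (q' - 1))) =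
      ((1 + ((q - 1) / ((n : ℝ) + 2 - n * q)) * (y ⬝ᵥ S⁻¹.mulVec y)) ^ (-(1 / (q - 1)))) ^ q := by
  have hn0 : (0:ℝ) < n := by exact_mod_cast hn
  have hq0 : (0:ℝ) < q := lt_trans one_pos hq1
  have hkey : (q - 1) * n < 2 := (lt_div_iff₀ hn0).mp (by linarith)
  have h1 : (0:ℝ) < (n : ℝ) + 2 - n * q := by nlinarith
  have h2 : (0:ℝ) < (n : ℝ) + (2 - (n:ℝ)) * q := by nlinarith
  set c : ℝ := ((n : ℝ) + 2 - n * q) / ((n : ℝ) + (2 - (n:ℝ)) * q) with hc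
  have hcpos : 0 < c := div_pos h1 h2
  set A : ℝ := y ⬝ᵥ S⁻¹.mulVec y with hA
  have hA0 : 0 ≤ A := (by simpa using hpos.inv.posSemidef.dotProduct_mulVec_nonneg y)
  have hSinv : S'⁻¹ = c⁻¹ • S⁻¹ := by
    haveI := invertibleOfNonzero hcpos.ne'
    rw [hS', Matrix.inv_smul (A := S) c (isUnit_iff_ne_zero.mpr hpos.det_pos.ne'), invOf_eq_inv]
  have hdot : y ⬝ᵥ S'⁻¹.mulVec y = c⁻¹ * A := by
    rw [hSinv, Matrix.smul_mulVec, dotProduct_smul, smul_eq_mul]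
  have hbase : 1 + ((q' - 1) / ((n : ℝ) + 2 - n * q')) * (y ⬝ᵥ S'⁻¹.mulVec y)
      = 1 + ((q - 1) / ((n : ℝ) + 2 - n * q)) * A := by
    rw [hdot, hq', hc]
    have hd : (n:ℝ) + 2 - n * (2 - 1/q) = ((n:ℝ) + (2 - n) * q) / q := by
      field_simp; ring
    rw [hd]
    have h1' := h1.ne'; have h2' := h2.ne'; have hq0' := hq0.ne'
    field_simp
    congr 1
    rw [div_eq_div_iff (mul_pos (by linarith) (by linarith)).ne' (by linarith : (0:ℝ) < _).ne']
    ring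
  have hB : 0 < 1 + ((q - 1) / ((n : ℝ) + 2 - n * q)) * A := by
    have : 0 ≤ ((q - 1) / ((n : ℝ) + 2 - n * q)) * A :=
      mul_nonneg (div_nonneg (by linarith) h1.le) hA0
    linarith
  have hexp : -(1 / (q' - 1)) = -(1 / (q - 1)) * q := by
    rw [hq']; field_simp; ring
  rw [hbase, hexp, Real.rpow_mul hB.le]
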